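/- arXiv:2206.07746 — 3 statements merged into one kernel-verified Lean document; each statement's English description precedes it below -/
import Mathlib

section
/- Let C ≥ 1, d ≥ 1, K ≥ 1. Suppose there are N real graphs, the i-th having adjacency matrix A_(i) ∈ ℝ^{m_i×m_i}, feature matrix X_(i) ∈ ℝ^{m_i×d} and label y_i ∈ {0,…,C−1}, and N' ≥ 1 synthetic graphs, the i-th having adjacency matrix A'_(i) ∈ ℝ^{n_i×n_i} with n_i ≥ 1 nodes, feature matrix X'_(i) ∈ ℝ^{n_i×d} and label y'_i. With the K-layer mean-pooling SGC classifier f_W(A,X) = (1/n)·1ᵀA^K X W ∈ ℝ^C for a graph on n nodes, define ℓ_T(W) = Σ_{i=1}^{N} ℓ(f_W(A_(i),X_(i)), y_i) and ℓ_S(W) = (1/N') Σ_{i=1}^{N'} ℓ(f_W(A'_(i),X'_(i)), y'_i), where ℓ is the softmax cross-entropy loss. Let L = ((C−1)/(C·N'))·√(Σ_{i=1}^{N'} (1/n_i)·‖1ᵀ(A'_(i))^K X'_(i)‖²) and assume L > 0. Fix M > 0, an integer T ≥ 1, set η = M/(√T·L), and let W_{t+1} = W_t − η·∇ℓ_S(W_t)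 for 0 ≤ t ≤ T−2 starting from W_0 ∈ ℝ^{d×C}. Let W* ∈ ℝ^{d×C} and assume (i) ‖W_t − W*‖ ≤ √2·M for all 0 ≤ t ≤ T−1, and (ii) ‖∇ℓ_S(W)‖ ≤ L for all W. Then min_{0≤t≤T−1} (ℓ_T(W_t) − ℓ_T(W*)) ≤ (√2·M/T)·Σ_{t=0}^{T−1} ‖∇ℓ_T(W_t) − ∇ℓ_S(W_t)‖ + (3M/(2√T))·((C−1)/(C·N'))·√(Σ_{i=1}^{N'} (1/n_i)·‖1ᵀ(A'_(i))^K X'_(i)‖²). -/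
open scoped BigOperators

open RealInnerProductSpace


lemma convexOn_logsumexp {C : ℕ} (hC : 0 < C) :
    ConvexOn ℝ Set.univ (fun z : Fin C → ℝ => Real.log (∑ c, Real.exp (z c))) := by
  have hne : Nonempty (Fin C) := ⟨⟨0, hC⟩⟩
  have hpos : ∀ v : Fin C → ℝ, 0 < ∑ c, Real.exp (v c) := fun v =>
    Finset.sum_pos (fun c _ => Real.exp_pos _) Finset.univ_nonempty
  refine ⟨convex_univ, ?_⟩
  intro z _ w _ a b ha hb hab
  rcases eq_or_lt_of_le ha with ha0 | ha
  · have hb1 : b = 1 := by linarith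
    simp [← ha0, hb1]
  rcases eq_or_lt_of_le hb with hb0 | hb
  · have ha1 : a = 1 := by linarith
    simp [← hb0, ha1]
  have ha1 : a < 1 := by linarith
  have hpq : Real.HolderConjugate a⁻¹ b⁻¹ :=
    Real.holderConjugate_iff.mpr ⟨one_lt_inv₀ ha |>.mpr ha1, by rw [inv_inv, inv_inv]; exact hab⟩
  have H := Real.inner_le_Lp_mul_Lq_of_nonneg (s := Finset.univ)
      (f := fun c => Real.exp (z c) ^ a) (g := fun c => Real.exp (w c) ^ b) hpq
      (fun c _ => Real.rpow_nonneg (Real.exp_pos _).le _)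
      (fun c _ => Real.rpow_nonneg (Real.exp_pos _).le _)
  have hfa : ∀ (v : Fin C → ℝ) (s : ℝ) (hs : s ≠ 0) (c : Fin C),
      (Real.exp (v c) ^ s) ^ (s⁻¹ : ℝ) = Real.exp (v c) := fun v s hs c => by
    rw [← Real.rpow_mul (Real.exp_pos _).le, mul_inv_cancel₀ hs, Real.rpow_one]
  simp only [hfa z a ha.ne', hfa w b hb.ne', one_div, inv_inv] at H
  have hLHS : ∀ c : Fin C, Real.exp ((a • z + b • w) c)
      = Real.exp (z c) ^ a * Real.exp (w c) ^ b := fun c => by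
    simp only [Pi.add_apply, Pi.smul_apply, smul_eq_mul]
    rw [Real.exp_add, mul_comm a, mul_comm b, Real.exp_mul, Real.exp_mul]
  calc Real.log (∑ c, Real.exp ((a • z + b • w) c))
      ≤ Real.log ((∑ c, Real.exp (z c)) ^ a * (∑ c, Real.exp (w c)) ^ b) := by
        apply Real.log_le_log (hpos _)
        calc ∑ c, Real.exp ((a • z + b • w) c)
            = ∑ c, Real.exp (z c) ^ a * Real.exp (w c) ^ b :=
              Finset.sum_congr rfl fun c _ => hLHS c
          _ ≤ _ := H
    _ = a * Real.log (∑ c, Real.exp (z c)) + b * Real.log (∑ c, Real.exp (w c)) := by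
        rw [Real.log_mul (Real.rpow_pos_of_pos (hpos z) a).ne'
            (Real.rpow_pos_of_pos (hpos w) b).ne',
          Real.log_rpow (hpos z), Real.log_rpow (hpos w)]
  -- done; goal uses • which is mul




lemma convexOn_finset_sum {E ι : Type*} [AddCommGroup E] [Module ℝ E] {s : Set E}
    (hs : Convex ℝ s) (t : Finset ι) {f : ι → E → ℝ}
    (hf : ∀ i ∈ t, ConvexOn ℝ s (f i)) :
    ConvexOn ℝ s (fun x => ∑ i ∈ t, f i x) := by
  classical
  induction t using Finset.induction_on with
  | empty => simpa using convexOn_const 0 hs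
  | @insert i t hi ih =>
    simp only [Finset.sum_insert hi]
    exact (hf i (Finset.mem_insert_self i t)).add
      (ih fun j hj => hf j (Finset.mem_insert_of_mem hj))

lemma convexOn_grad_ineq {F : Type*} [NormedAddCommGroup F] [InnerProductSpace ℝ F]
    [CompleteSpace F] {f : F → ℝ} (hconv : ConvexOn ℝ Set.univ f)
    (hdiff : Differentiable ℝ f) (x y : F) :
    f x - f y ≤ ⟪gradient f x, x - y⟫ := by
  set v := y - x with hv
  have hfd : HasFDerivAt f ((InnerProductSpace.toDual ℝ F) (gradient f x)) x :=
    (hdiff x).hasGradientAt.hasFDerivAt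
  have hcurve : HasDerivAt (fun s : ℝ => x + s • v) v 0 := by
    simpa using ((hasDerivAt_id (0:ℝ)).smul_const v).const_add x
  have hg : HasDerivAt (fun s : ℝ => f (x + s • v)) ⟪gradient f x, v⟫ 0 := by
    have := hfd.comp_hasDerivAt_of_eq 0 hcurve (by simp)
    simpa [Function.comp_def, InnerProductSpace.toDual_apply_apply] using this
  have hgc : ConvexOn ℝ Set.univ (fun s : ℝ => f (x + s • v)) := by
    have h := hconv.comp_affineMap (AffineMap.lineMap x y : ℝ →ᵃ[ℝ] F)
    rw [Set.preimage_univ] at h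
    convert h using 1
    iterate 4 rfl
    funext s
    simp only [Function.comp_apply, AffineMap.lineMap_apply_module, hv]
    congr 1
    rw [sub_smul, smul_sub, one_smul]
    abel
  have hslope := hgc.le_slope_of_hasDerivAt (Set.mem_univ (0:ℝ)) (Set.mem_univ 1)
    zero_lt_one hg
  rw [slope_def_field] at hslope
  simp only [zero_smul, add_zero, one_smul, sub_zero, div_one] at hslope
  have h1 : x + v = y := by rw [hv]; abel
  rw [h1] at hslope
  have : ⟪gradient f x, x - y⟫ = - ⟪gradient f x, v⟫ := by
    rw [hv, ← inner_neg_right]; norm_num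
  linarith [hslope, this.ge]

/-- The softmax cross-entropy loss of a logit vector `z : ℝ^C` with label `y`. -/
noncomputable def crossEntropy {C : ℕ} (z : Fin C → ℝ) (y : Fin C) : ℝ :=
  Real.log (∑ c, Real.exp (z c)) - z y

/-- The logits of the `K`-layer mean-pooling SGC classifier `(1/n)·1ᵀ A^K X W ∈ ℝ^C`. -/
noncomputable def sgcMeanLogits {n d C : ℕ} (K : ℕ)
    (A : Matrix (Fin n) (Fin n) ℝ) (X : Matrix (Fin n) (Fin d) ℝ)
    (W : EuclideanSpace ℝ (Fin d × Fin C)) : Fin C → ℝ :=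
  fun c => ∑ j, ((1 / (n : ℝ)) * ∑ u, ∑ u', (A ^ K) u u' * X u' j) * W (j, c)

lemma descent_identity {F : Type*} [NormedAddCommGroup F] [InnerProductSpace ℝ F]
    (g w ws : F) (η : ℝ) :
    2 * η * ⟪g, w - ws⟫ =
      ‖w - ws‖ ^ 2 - ‖w - η • g - ws‖ ^ 2 + η ^ 2 * ‖g‖ ^ 2 := by
  have h1 : w - η • g - ws = (w - ws) - η • g := by abel
  rw [h1, norm_sub_sq_real (w - ws) (η • g), inner_smul_right, real_inner_comm, norm_smul,
    Real.norm_eq_abs, mul_pow, sq_abs]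
  ring

lemma sgc_convex_diff {d C : ℕ} (hC : 0 < C) (coef : Fin d → ℝ) (y : Fin C) :
    ConvexOn ℝ Set.univ (fun W : EuclideanSpace ℝ (Fin d × Fin C) =>
      crossEntropy (fun c => ∑ j, coef j * W (j, c)) y) ∧
    Differentiable ℝ (fun W : EuclideanSpace ℝ (Fin d × Fin C) =>
      crossEntropy (fun c => ∑ j, coef j * W (j, c)) y) := by
  have hne : Nonempty (Fin C) := ⟨⟨0, hC⟩⟩
  have hlin : ∀ c : Fin C, Differentiable ℝ
      (fun W : EuclideanSpace ℝ (Fin d × Fin C) => ∑ j, coef j * W (j, c)) := by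
    intro c
    apply Differentiable.fun_sum
    intro j _
    exact (differentiable_const (coef j)).mul (EuclideanSpace.proj (𝕜 := ℝ) ((j, c) : Fin d × Fin C)).differentiable
  constructor
  · -- convexity
    have hlse : ConvexOn ℝ Set.univ
        (fun z : Fin C → ℝ => Real.log (∑ c, Real.exp (z c))) := convexOn_logsumexp hC
    let Z : EuclideanSpace ℝ (Fin d × Fin C) →ₗ[ℝ] (Fin C → ℝ) :=
      { toFun := fun W c => ∑ j, coef j * W (j, c)
        map_add' := fun V V' => by
          funext c
          simp [PiLp.add_apply, mul_add, Finset.sum_add_distrib]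
        map_smul' := fun r V => by
          funext c
          simp only [PiLp.smul_apply, smul_eq_mul, RingHom.id_apply, Pi.smul_apply,
            Finset.mul_sum]
          exact Finset.sum_congr rfl fun j _ => by ring }
    have h1 : ConvexOn ℝ Set.univ (fun W : EuclideanSpace ℝ (Fin d × Fin C) =>
        Real.log (∑ c, Real.exp (Z W c))) := by
      have h := hlse.comp_affineMap Z.toAffineMap
      rw [Set.preimage_univ] at h
      exact h
    have h2 : ConvexOn ℝ Set.univ (fun W : EuclideanSpace ℝ (Fin d × Fin C) =>
        -(Z W y)) := (-(LinearMap.proj y ∘ₗ Z) : EuclideanSpace ℝ (Fin d × Fin C) →ₗ[ℝ] ℝ).convexOn convex_univ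
    have h3 := h1.add h2
    convert h3 using 1
    rfl
    rfl
  · -- differentiability
    intro W
    apply DifferentiableAt.sub
    · apply DifferentiableAt.log
      · exact DifferentiableAt.fun_sum fun c _ => ((hlin c) W).exp
      · exact (Finset.sum_pos (fun c _ => Real.exp_pos _) Finset.univ_nonempty).ne'
    · exact (hlin y) W

/-- Theorem 1 of the paper (mean-pooling case, `γ_i = 1/n_i`): one-step gradient matching
bound for graph classification with a `K`-layer mean-pooling SGC classifier. -/
theorem one_step_gradient_matching_mean_pooling
    (C d K N N' : ℕ) (hC : 1 ≤ C) (hd : 1 ≤ d) (hK : 1 ≤ K) (hN' : 1 ≤ N')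
    (m : Fin N → ℕ)
    (A : ∀ i : Fin N, Matrix (Fin (m i)) (Fin (m i)) ℝ)
    (X : ∀ i : Fin N, Matrix (Fin (m i)) (Fin d) ℝ)
    (y : Fin N → Fin C)
    (n : Fin N' → ℕ) (hn : ∀ i, 1 ≤ n i)
    (A' : ∀ i : Fin N', Matrix (Fin (n i)) (Fin (n i)) ℝ)
    (X' : ∀ i : Fin N', Matrix (Fin (n i)) (Fin d) ℝ)
    (y' : Fin N' → Fin C)
    (lossT lossS : EuclideanSpace ℝ (Fin d × Fin C) → ℝ)
    (hlossT : lossT = fun W => ∑ i, crossEntropy (sgcMeanLogits K (A i) (X i) W) (y i))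
    (hlossS : lossS = fun W =>
      (1 / (N' : ℝ)) * ∑ i, crossEntropy (sgcMeanLogits K (A' i) (X' i) W) (y' i))
    (L : ℝ)
    (hL : L = (((C : ℝ) - 1) / ((C : ℝ) * (N' : ℝ))) *
      Real.sqrt (∑ i, (1 / (n i : ℝ)) *
        ∑ j, (∑ u, ∑ u', ((A' i) ^ K) u u' * X' i u' j) ^ 2))
    (hLpos : 0 < L)
    (M : ℝ) (hM : 0 < M) (T : ℕ) (hT : 1 ≤ T)
    (η : ℝ) (hη : η = M / (Real.sqrt T * L))
    (W : ℕ → EuclideanSpace ℝ (Fin d × Fin C))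
    (hstep : ∀ t, t + 2 ≤ T → W (t + 1) = W t - η • gradient lossS (W t))
    (Wstar : EuclideanSpace ℝ (Fin d × Fin C))
    (hbdd : ∀ t < T, ‖W t - Wstar‖ ≤ Real.sqrt 2 * M)
    (hgrad : ∀ V : EuclideanSpace ℝ (Fin d × Fin C), ‖gradient lossS V‖ ≤ L) :
    ∃ t < T, lossT (W t) - lossT Wstar ≤
      (Real.sqrt 2 * M / T) *
          ∑ t ∈ Finset.range T, ‖gradient lossT (W t) - gradient lossS (W t)‖ +
        (3 * M / (2 * Real.sqrt T)) * (((C : ℝ) - 1) / ((C : ℝ) * (N' : ℝ))) *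
          Real.sqrt (∑ i, (1 / (n i : ℝ)) *
            ∑ j, (∑ u, ∑ u', ((A' i) ^ K) u u' * X' i u' j) ^ 2) := by
  classical
  have hC0 : 0 < C := hC
  -- convexity and differentiability of lossT
  have hconvT : ConvexOn ℝ Set.univ lossT := by
    rw [hlossT]
    exact convexOn_finset_sum convex_univ Finset.univ
      (fun i _ => (sgc_convex_diff hC0
        (fun j => (1 / (m i : ℝ)) * ∑ u, ∑ u', ((A i) ^ K) u u' * X i u' j) (y i)).1)
  have hdiffT : Differentiable ℝ lossT := by
    rw [hlossT]
    exact Differentiable.fun_sum fun i _ => (sgc_convex_diff hC0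
      (fun j => (1 / (m i : ℝ)) * ∑ u, ∑ u', ((A i) ^ K) u u' * X i u' j) (y i)).2
  have hT0 : (0:ℝ) < (T:ℝ) := by exact_mod_cast Nat.lt_of_lt_of_le Nat.zero_lt_one hT
  have hsT : 0 < Real.sqrt T := Real.sqrt_pos.mpr hT0
  have hT2 : Real.sqrt T * Real.sqrt T = (T:ℝ) := Real.mul_self_sqrt hT0.le
  have hηpos : 0 < η := by rw [hη]; positivity
  have hηM : η * Real.sqrt T * L = M := by
    rw [hη]; field_simp
  set g := fun t => gradient lossS (W t) with hgdef
  set gT := fun t => gradient lossT (W t) with hgTdef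
  set D := ∑ t ∈ Finset.range T, ‖gT t - g t‖ with hDdef
  set S1 := ∑ t ∈ Finset.range T, (⟪g t, W t - Wstar⟫ : ℝ) with hS1def
  -- per-step bound from convexity
  have key : ∀ t < T, lossT (W t) - lossT Wstar ≤
      Real.sqrt 2 * M * ‖gT t - g t‖ + ⟪g t, W t - Wstar⟫ := by
    intro t ht
    have h1 := convexOn_grad_ineq hconvT hdiffT (W t) Wstar
    have h2 : (⟪gT t, W t - Wstar⟫ : ℝ)
        = ⟪gT t - g t, W t - Wstar⟫ + ⟪g t, W t - Wstar⟫ := by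
      rw [inner_sub_left]; ring
    have h3 : (⟪gT t - g t, W t - Wstar⟫ : ℝ) ≤ ‖gT t - g t‖ * ‖W t - Wstar‖ :=
      real_inner_le_norm _ _
    have h4 : ‖gT t - g t‖ * ‖W t - Wstar‖ ≤ Real.sqrt 2 * M * ‖gT t - g t‖ := by
      rw [mul_comm (Real.sqrt 2 * M) _]
      exact mul_le_mul_of_nonneg_left (hbdd t ht) (norm_nonneg _)
    linarith
  -- bound on S1
  have hS1b : 2 * η * S1 ≤ 3 * M ^ 2 := by
    obtain ⟨Tm, rfl⟩ : ∃ Tm, T = Tm + 1 := ⟨T - 1, by omega⟩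
    have h2eta : ∀ t, 2 * η * (⟪g t, W t - Wstar⟫ : ℝ) =
        ‖W t - Wstar‖ ^ 2 - ‖W t - η • g t - Wstar‖ ^ 2 + η ^ 2 * ‖g t‖ ^ 2 :=
      fun t => descent_identity (g t) (W t) Wstar η
    have htele : ∑ t ∈ Finset.range (Tm + 1),
        (‖W t - Wstar‖ ^ 2 - ‖W t - η • g t - Wstar‖ ^ 2) ≤ 2 * M ^ 2 := by
      rw [Finset.sum_range_succ]
      have hre : ∀ t ∈ Finset.range Tm,
          ‖W t - Wstar‖ ^ 2 - ‖W t - η • g t - Wstar‖ ^ 2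
            = ‖W t - Wstar‖ ^ 2 - ‖W (t + 1) - Wstar‖ ^ 2 := by
        intro t ht
        rw [hstep t (by have := Finset.mem_range.mp ht; omega)]
      rw [Finset.sum_congr rfl hre, Finset.sum_range_sub' (fun t => ‖W t - Wstar‖ ^ 2)]
      have hb0 : ‖W 0 - Wstar‖ ≤ Real.sqrt 2 * M := hbdd 0 (by omega)
      have hb0' : ‖W 0 - Wstar‖ ^ 2 ≤ (Real.sqrt 2 * M) ^ 2 :=
        pow_le_pow_left₀ (norm_nonneg _) hb0 2
      have h2m : (Real.sqrt 2 * M) ^ 2 = 2 * M ^ 2 := by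
        rw [mul_pow, Real.sq_sqrt (by norm_num : (0:ℝ) ≤ 2)]
      nlinarith [sq_nonneg ‖W Tm - η • g Tm - Wstar‖, sq_nonneg ‖W (Tm + 1) - Wstar‖]
    have hgsq : ∑ t ∈ Finset.range (Tm + 1), ‖g t‖ ^ 2 ≤ ((Tm + 1 : ℕ) : ℝ) * L ^ 2 := by
      calc ∑ t ∈ Finset.range (Tm + 1), ‖g t‖ ^ 2
          ≤ ∑ _t ∈ Finset.range (Tm + 1), L ^ 2 :=
            Finset.sum_le_sum fun t _ => pow_le_pow_left₀ (norm_nonneg _) (hgrad (W t)) 2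
        _ = ((Tm + 1 : ℕ) : ℝ) * L ^ 2 := by
            rw [Finset.sum_const, Finset.card_range, nsmul_eq_mul]
    have hA : η ^ 2 * (((Tm + 1 : ℕ) : ℝ) * L ^ 2) = M ^ 2 := by
      linear_combination (η * Real.sqrt ((Tm + 1 : ℕ) : ℝ) * L + M) * hηM
        - η ^ 2 * L ^ 2 * hT2
    have hexp : 2 * η * S1 = (∑ t ∈ Finset.range (Tm + 1),
          (‖W t - Wstar‖ ^ 2 - ‖W t - η • g t - Wstar‖ ^ 2))
        + η ^ 2 * ∑ t ∈ Finset.range (Tm + 1), ‖g t‖ ^ 2 := by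
      rw [hS1def, Finset.mul_sum, Finset.mul_sum, ← Finset.sum_add_distrib]
      exact Finset.sum_congr rfl fun t _ => by rw [h2eta t]
    have := mul_le_mul_of_nonneg_left hgsq (sq_nonneg η)
    linarith
  -- min ≤ average, by contradiction
  by_contra hcon
  push_neg at hcon
  set R := (Real.sqrt 2 * M / T) * D +
      (3 * M / (2 * Real.sqrt T)) * (((C : ℝ) - 1) / ((C : ℝ) * (N' : ℝ))) *
        Real.sqrt (∑ i, (1 / (n i : ℝ)) *
          ∑ j, (∑ u, ∑ u', ((A' i) ^ K) u u' * X' i u' j) ^ 2) with hRdef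
  have hRL : R = (Real.sqrt 2 * M / T) * D + (3 * M / (2 * Real.sqrt T)) * L := by
    rw [hRdef, hL, mul_assoc]
  have hlt : (T:ℝ) * R < ∑ t ∈ Finset.range T, (lossT (W t) - lossT Wstar) := by
    have := Finset.sum_lt_sum_of_nonempty (Finset.nonempty_range_iff.mpr (by omega))
      (f := fun _ => R) (fun t ht => hcon t (Finset.mem_range.mp ht))
    simpa [Finset.sum_const, Finset.card_range, nsmul_eq_mul] using this
  have hSig : ∑ t ∈ Finset.range T, (lossT (W t) - lossT Wstar)
      ≤ Real.sqrt 2 * M * D + S1 := by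
    calc ∑ t ∈ Finset.range T, (lossT (W t) - lossT Wstar)
        ≤ ∑ t ∈ Finset.range T,
            (Real.sqrt 2 * M * ‖gT t - g t‖ + ⟪g t, W t - Wstar⟫) :=
          Finset.sum_le_sum fun t ht => key t (Finset.mem_range.mp ht)
      _ = Real.sqrt 2 * M * D + S1 := by
          rw [Finset.sum_add_distrib, hDdef, hS1def, Finset.mul_sum]
  have hB : 2 * η * ((T:ℝ) * R - Real.sqrt 2 * M * D) = 3 * M ^ 2 := by
    rw [hRL]
    field_simp
    linear_combination (3 * Real.sqrt T) * hηM - (3 * η * L) * hT2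
  have h5 : (T:ℝ) * R - Real.sqrt 2 * M * D < S1 := by linarith
  have h6 : 2 * η * ((T:ℝ) * R - Real.sqrt 2 * M * D) < 2 * η * S1 :=
    mul_lt_mul_of_pos_left h5 (by linarith)
  linarith
end

section
/- Let E be a real Hilbert space and let f, g : E → ℝ be differentiable everywhere, with f convex, and denote their gradients by ∇f and ∇g. Let θ* ∈ E, η > 0, an integer T ≥ 1, and let θ_0, θ_1, …, θ_T ∈ E satisfy θ_{t+1} = θ_t − η·∇g(θ_t) for 0 ≤ t ≤ T−1. Then Σ_{t=0}^{T−1} (f(θ_t) − f(θ*)) ≤ Σ_{t=0}^{T−1} ⟨∇f(θ_t) − ∇g(θ_t), θ_t − θ*⟩ + (η/2)·Σ_{t=0}^{T−1} ‖∇g(θ_t)‖² + (1/(2η))·‖θ_0 − θ*‖². -/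
open scoped BigOperators RealInnerProductSpace

lemma convex_grad_ineq
    {E : Type*} [NormedAddCommGroup E] [InnerProductSpace ℝ E] [CompleteSpace E]
    (f : E → ℝ) (hf : Differentiable ℝ f) (hconv : ConvexOn ℝ Set.univ f)
    (x y : E) : f y - f x ≤ ⟪gradient f y, y - x⟫ := by
  -- convexity of the 1D restriction
  have hcomp : ConvexOn ℝ Set.univ (fun s : ℝ => f (x + s • (y - x))) := by
    have := hconv.comp_affineMap (AffineMap.lineMap x y : ℝ →ᵃ[ℝ] E)
    have heq : (f ∘ (AffineMap.lineMap x y : ℝ →ᵃ[ℝ] E))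
        = fun s : ℝ => f (x + s • (y - x)) := by
      funext s
      congr 1
      simp [AffineMap.lineMap_apply_module, sub_smul, smul_sub]
      abel
    rw [heq] at this
    simpa using this
  -- derivative at 1
  have hline : HasDerivAt (fun s : ℝ => x + s • (y - x)) (y - x) 1 := by
    simpa using ((hasDerivAt_id (1 : ℝ)).smul_const (y - x)).const_add x
  have hF : HasFDerivAt f (InnerProductSpace.toDual ℝ E (gradient f y)) y :=
    hasGradientAt_iff_hasFDerivAt.mp (hf y).hasGradientAt
  have hF' : HasFDerivAt f (InnerProductSpace.toDual ℝ E (gradient f y))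
      (x + (1 : ℝ) • (y - x)) := by simpa using hF
  have hD : HasDerivAt (fun s : ℝ => f (x + s • (y - x)))
      ⟪gradient f y, y - x⟫ 1 := by
    have := hF'.comp_hasDerivAt (1 : ℝ) hline
    exact this
  have hslope := hcomp.slope_le_of_hasDerivAt (Set.mem_univ (0 : ℝ))
    (Set.mem_univ (1 : ℝ)) one_pos hD
  have : slope (fun s : ℝ => f (x + s • (y - x))) 0 1 = f y - f x := by
    simp [slope_def_field]
  linarith [hslope, this ▸ hslope]

/-- The summed intermediate inequality (Eq. (16) in the proof of Theorem 1):
combining convexity of `f` with the gradient-descent identity for `g` and telescoping. -/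
theorem summed_intermediate_inequality
    {E : Type*} [NormedAddCommGroup E] [InnerProductSpace ℝ E] [CompleteSpace E]
    (f g : E → ℝ) (hf : Differentiable ℝ f) (hg : Differentiable ℝ g)
    (hconv : ConvexOn ℝ Set.univ f)
    (θstar : E) (η : ℝ) (hη : 0 < η) (T : ℕ) (hT : 1 ≤ T)
    (θ : ℕ → E) (hstep : ∀ t < T, θ (t + 1) = θ t - η • gradient g (θ t)) :
    ∑ t ∈ Finset.range T, (f (θ t) - f θstar) ≤
      ∑ t ∈ Finset.range T, ⟪gradient f (θ t) - gradient g (θ t), θ t - θstar⟫ +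
        (η / 2) * ∑ t ∈ Finset.range T, ‖gradient g (θ t)‖ ^ 2 +
        (1 / (2 * η)) * ‖θ 0 - θstar‖ ^ 2 := by
  -- pointwise bound
  have key : ∀ t < T, f (θ t) - f θstar ≤
      ⟪gradient f (θ t) - gradient g (θ t), θ t - θstar⟫ +
        (η / 2) * ‖gradient g (θ t)‖ ^ 2 +
        (1 / (2 * η)) * (‖θ t - θstar‖ ^ 2 - ‖θ (t + 1) - θstar‖ ^ 2) := by
    intro t ht
    have h1 : f (θ t) - f θstar ≤ ⟪gradient f (θ t), θ t - θstar⟫ :=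
      convex_grad_ineq f hf hconv θstar (θ t)
    have hexp : ‖θ (t + 1) - θstar‖ ^ 2
        = ‖θ t - θstar‖ ^ 2 - 2 * η * ⟪gradient g (θ t), θ t - θstar⟫
          + η ^ 2 * ‖gradient g (θ t)‖ ^ 2 := by
      rw [hstep t ht, show θ t - η • gradient g (θ t) - θstar
        = (θ t - θstar) - η • gradient g (θ t) by abel]
      rw [norm_sub_sq_real, real_inner_smul_right, norm_smul]
      rw [real_inner_comm]
      simp [abs_of_pos hη, mul_pow]
      ring
    have hsplit : ⟪gradient f (θ t), θ t - θstar⟫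
        = ⟪gradient f (θ t) - gradient g (θ t), θ t - θstar⟫
          + ⟪gradient g (θ t), θ t - θstar⟫ := by
      rw [inner_sub_left]; ring
    have hη' : η ≠ 0 := ne_of_gt hη
    have hg2 : ⟪gradient g (θ t), θ t - θstar⟫
        = (η / 2) * ‖gradient g (θ t)‖ ^ 2
          + (1 / (2 * η)) * (‖θ t - θstar‖ ^ 2 - ‖θ (t + 1) - θstar‖ ^ 2) := by
      field_simp
      nlinarith [hexp]
    linarith [h1, hsplit ▸ h1]
  -- sum up
  have hsum : ∑ t ∈ Finset.range T, (f (θ t) - f θstar) ≤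
      ∑ t ∈ Finset.range T, (⟪gradient f (θ t) - gradient g (θ t), θ t - θstar⟫ +
        (η / 2) * ‖gradient g (θ t)‖ ^ 2 +
        (1 / (2 * η)) * (‖θ t - θstar‖ ^ 2 - ‖θ (t + 1) - θstar‖ ^ 2)) :=
    Finset.sum_le_sum fun t ht => key t (Finset.mem_range.mp ht)
  have htel : ∑ t ∈ Finset.range T,
      (‖θ t - θstar‖ ^ 2 - ‖θ (t + 1) - θstar‖ ^ 2)
      = ‖θ 0 - θstar‖ ^ 2 - ‖θ T - θstar‖ ^ 2 :=
    Finset.sum_range_sub' (fun n => ‖θ n - θstar‖ ^ 2) T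
  have hηpos : 0 < 1 / (2 * η) := by positivity
  have hnn : 0 ≤ ‖θ T - θstar‖ ^ 2 := by positivity
  calc ∑ t ∈ Finset.range T, (f (θ t) - f θstar)
      ≤ ∑ t ∈ Finset.range T, ⟪gradient f (θ t) - gradient g (θ t), θ t - θstar⟫ +
        (η / 2) * ∑ t ∈ Finset.range T, ‖gradient g (θ t)‖ ^ 2 +
        (1 / (2 * η)) * (‖θ 0 - θstar‖ ^ 2 - ‖θ T - θstar‖ ^ 2) := by
        rw [← htel, Finset.mul_sum, Finset.mul_sum, ← Finset.sum_add_distrib,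
          ← Finset.sum_add_distrib]
        exact hsum
    _ ≤ _ := by nlinarith [mul_nonneg (le_of_lt hηpos) hnn]
end

section
/- Let E be a real Hilbert space and let f, g : E → ℝ be differentiable everywhere, with f convex, and denote their gradients by ∇f and ∇g. Let θ* ∈ E, M > 0, L > 0, an integer T ≥ 1, and set η = M/(√T·L). Let θ_0, θ_1, …, θ_{T−1} ∈ E satisfy θ_{t+1} = θ_t − η·∇g(θ_t) for 0 ≤ t ≤ T−2. Assume ‖θ_t − θ*‖ ≤ √2·M for all 0 ≤ t ≤ T−1, ‖∇g(θ)‖ ≤ L for all θ ∈ E, and that the largest gradient gap occurs at t = 0, i.e., ‖∇f(θ_0) − ∇g(θ_0)‖ ≥ ‖∇f(θ_t) − ∇g(θ_t)‖ for all 0 ≤ t ≤ T−1. Then min_{0≤t≤T−1} (f(θ_t) − f(θ*)) ≤ √2·M·‖∇f(θ_0) − ∇g(θ_0)‖ + (3·M·L)/(2·√T). -/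
open scoped BigOperators
open scoped RealInnerProductSpace

lemma grad_convex_ineq {E : Type*} [NormedAddCommGroup E] [InnerProductSpace ℝ E]
    [CompleteSpace E]
    (f : E → ℝ) (hf : Differentiable ℝ f) (hconv : ConvexOn ℝ Set.univ f) (x y : E) :
    f x + ⟪gradient f x, y - x⟫ ≤ f y := by
  have hL : HasFDerivAt f (InnerProductSpace.toDual ℝ E (gradient f x)) x :=
    hasGradientAt_iff_hasFDerivAt.mp (hf x).hasGradientAt
  have hc : HasDerivAt (fun s : ℝ => (AffineMap.lineMap x y) s) (y - x) 0 := by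
    have : HasDerivAt (fun s : ℝ => s • (y - x) + x) ((1:ℝ) • (y - x)) 0 :=
      ((hasDerivAt_id (0:ℝ)).smul_const (y - x)).add_const x
    simpa [AffineMap.lineMap_apply, one_smul] using this
  have hφ : HasDerivAt (fun s : ℝ => f ((AffineMap.lineMap x y) s))
      ⟪gradient f x, y - x⟫ 0 := by
    have hL' : HasFDerivAt f (InnerProductSpace.toDual ℝ E (gradient f x))
        ((AffineMap.lineMap x y) (0:ℝ)) := by simpa [AffineMap.lineMap_apply] using hL
    have := (hL'.comp_hasDerivAt 0 hc)
    simpa [InnerProductSpace.toDual_apply_apply, Function.comp_def] using this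
  have hφc : ConvexOn ℝ Set.univ (fun s : ℝ => f ((AffineMap.lineMap x y) s)) := by
    have := hconv.comp_affineMap (AffineMap.lineMap x y)
    simpa [Function.comp_def] using this
  have hs := hφc.le_slope_of_hasDerivAt (Set.mem_univ (0:ℝ)) (Set.mem_univ (1:ℝ))
    zero_lt_one hφ
  rw [slope_def_field] at hs
  simp [AffineMap.lineMap_apply] at hs
  have he : ⟪gradient f x, y - x⟫ = fderiv ℝ f x y - fderiv ℝ f x x := by
    rw [← map_sub, hL.fderiv, InnerProductSpace.toDual_apply_apply]
  linarith

lemma step_inner_eq {E : Type*} [NormedAddCommGroup E] [InnerProductSpace ℝ E]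
    (x v p : E) (η : ℝ) (hη : 0 < η) :
    ⟪v, x - p⟫ = (‖x - p‖ ^ 2 - ‖x - η • v - p‖ ^ 2) / (2 * η) + η * ‖v‖ ^ 2 / 2 := by
  have h1 : x - η • v - p = (x - p) - η • v := by abel
  have h2 : ‖(x - p) - η • v‖ ^ 2
      = ‖x - p‖ ^ 2 - 2 * ⟪x - p, η • v⟫ + ‖η • v‖ ^ 2 := norm_sub_sq_real _ _
  have h3 : ⟪x - p, η • v⟫ = η * ⟪v, x - p⟫ := by
    rw [real_inner_smul_right, real_inner_comm]
  have h4 : ‖η • v‖ ^ 2 = η ^ 2 * ‖v‖ ^ 2 := by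
    rw [norm_smul, mul_pow, Real.norm_eq_abs, sq_abs]
  rw [h1, h2, h3, h4]
  field_simp
  ring

/-- Abstract form of Proposition 1: if the gradient discrepancy between `f` and `g`
is largest at initialization, the one-step matching loss bounds the minimal
suboptimality along the gradient-descent trajectory on `g`. -/
theorem one_step_matching_largest_gap_at_init
    {E : Type*} [NormedAddCommGroup E] [InnerProductSpace ℝ E] [CompleteSpace E]
    (f g : E → ℝ) (hf : Differentiable ℝ f) (hg : Differentiable ℝ g)
    (hconv : ConvexOn ℝ Set.univ f)
    (θstar : E) (M L : ℝ) (hM : 0 < M) (hL : 0 < L)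
    (T : ℕ) (hT : 1 ≤ T)
    (η : ℝ) (hη : η = M / (Real.sqrt T * L))
    (θ : ℕ → E) (hstep : ∀ t, t + 2 ≤ T → θ (t + 1) = θ t - η • gradient g (θ t))
    (hbdd : ∀ t < T, ‖θ t - θstar‖ ≤ Real.sqrt 2 * M)
    (hgrad : ∀ x : E, ‖gradient g x‖ ≤ L)
    (hmax : ∀ t < T, ‖gradient f (θ t) - gradient g (θ t)‖ ≤
      ‖gradient f (θ 0) - gradient g (θ 0)‖) :
    ∃ t < T, f (θ t) - f θstar ≤
      Real.sqrt 2 * M * ‖gradient f (θ 0) - gradient g (θ 0)‖ +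
        3 * M * L / (2 * Real.sqrt T) := by
  classical
  set s := Real.sqrt T with hsdef
  have hTpos : (0:ℝ) < T := by exact_mod_cast Nat.lt_of_lt_of_le Nat.zero_lt_one hT
  have hspos : 0 < s := Real.sqrt_pos.mpr hTpos
  have hss : s * s = (T:ℝ) := Real.mul_self_sqrt hTpos.le
  have hηpos : 0 < η := by rw [hη]; positivity
  set Δ := ‖gradient f (θ 0) - gradient g (θ 0)‖ with hΔdef
  have hΔ0 : 0 ≤ Δ := norm_nonneg _
  by_contra hcon
  push_neg at hcon
  set θhat : ℕ → E := fun t =>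
    if t < T then θ t else θ (T-1) - η • gradient g (θ (T-1)) with hθhat
  have hupd : ∀ t < T, θhat (t+1) = θ t - η • gradient g (θ t) := by
    intro t ht
    by_cases h : t + 1 < T
    · have hs2 := hstep t (by omega)
      simp only [hθhat, if_pos h]
      exact hs2.symm ▸ hs2
    · have h1 : t = T - 1 := by omega
      subst h1
      simp only [hθhat]
      rw [if_neg (by omega : ¬ (T - 1 + 1 < T))]
  have key : ∀ t < T, (⟪gradient g (θ t), θ t - θstar⟫ : ℝ)
      = (‖θhat t - θstar‖^2 - ‖θhat (t+1) - θstar‖^2) / (2*η)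
        + η * ‖gradient g (θ t)‖^2 / 2 := by
    intro t ht
    have h0 : θhat t = θ t := by simp only [hθhat, if_pos ht]
    rw [h0, hupd t ht]
    exact step_inner_eq _ _ _ _ hηpos
  have hper : ∀ t < T, f (θ t) - f θstar ≤
      (‖θhat t - θstar‖^2 - ‖θhat (t+1) - θstar‖^2) / (2*η)
        + η * L^2 / 2 + Real.sqrt 2 * M * Δ := by
    intro t ht
    have h1 := grad_convex_ineq f hf hconv (θ t) θstar
    have h2 : (⟪gradient f (θ t), θstar - θ t⟫ : ℝ)
        = - ⟪gradient f (θ t), θ t - θstar⟫ := by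
      rw [← inner_neg_right]; congr 1; abel
    have hsplit : (⟪gradient f (θ t), θ t - θstar⟫ : ℝ)
        = ⟪gradient g (θ t), θ t - θstar⟫
          + ⟪gradient f (θ t) - gradient g (θ t), θ t - θstar⟫ := by
      rw [← inner_add_left]; congr 1; abel
    have hcs : (⟪gradient f (θ t) - gradient g (θ t), θ t - θstar⟫ : ℝ)
        ≤ Real.sqrt 2 * M * Δ := by
      calc (⟪gradient f (θ t) - gradient g (θ t), θ t - θstar⟫ : ℝ)
          ≤ ‖gradient f (θ t) - gradient g (θ t)‖ * ‖θ t - θstar‖ :=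
            real_inner_le_norm _ _
        _ ≤ Δ * (Real.sqrt 2 * M) :=
            mul_le_mul (hmax t ht) (hbdd t ht) (norm_nonneg _) hΔ0
        _ = Real.sqrt 2 * M * Δ := by ring
    have hg2 : η * ‖gradient g (θ t)‖^2 / 2 ≤ η * L^2 / 2 := by
      have hb := hgrad (θ t)
      have hnn := norm_nonneg (gradient g (θ t))
      have hsq : ‖gradient g (θ t)‖^2 ≤ L^2 := by nlinarith
      have := mul_le_mul_of_nonneg_left hsq hηpos.le
      linarith
    have hk := key t ht
    rw [h2] at h1
    linarith
  have hsum : ∑ t ∈ Finset.range T, (f (θ t) - f θstar)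
      ≤ (‖θhat 0 - θstar‖^2 - ‖θhat T - θstar‖^2) / (2*η)
        + T * (η * L^2 / 2) + T * (Real.sqrt 2 * M * Δ) := by
    calc ∑ t ∈ Finset.range T, (f (θ t) - f θstar)
        ≤ ∑ t ∈ Finset.range T,
            ((‖θhat t - θstar‖^2 - ‖θhat (t+1) - θstar‖^2)/(2*η)
              + η*L^2/2 + Real.sqrt 2 * M * Δ) :=
          Finset.sum_le_sum fun t ht => hper t (Finset.mem_range.mp ht)
      _ = (∑ t ∈ Finset.range T,
            (‖θhat t - θstar‖^2 - ‖θhat (t+1) - θstar‖^2))/(2*η)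
          + T * (η*L^2/2) + T * (Real.sqrt 2 * M * Δ) := by
          rw [Finset.sum_add_distrib, Finset.sum_add_distrib, ← Finset.sum_div,
            Finset.sum_const, Finset.sum_const, Finset.card_range,
            nsmul_eq_mul, nsmul_eq_mul]
      _ = (‖θhat 0 - θstar‖^2 - ‖θhat T - θstar‖^2) / (2*η)
          + T * (η * L^2 / 2) + T * (Real.sqrt 2 * M * Δ) := by
          rw [Finset.sum_range_sub' (fun t => ‖θhat t - θstar‖^2)]
  have hlow : (T:ℝ) * (Real.sqrt 2 * M * Δ + 3 * M * L / (2 * s))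
      < ∑ t ∈ Finset.range T, (f (θ t) - f θstar) := by
    have hne : (Finset.range T).Nonempty := Finset.nonempty_range_iff.mpr (by omega)
    have h0 := Finset.sum_lt_sum_of_nonempty hne
      (f := fun _ => Real.sqrt 2 * M * Δ + 3 * M * L / (2 * s))
      (g := fun t => f (θ t) - f θstar)
      (fun t ht => hcon t (Finset.mem_range.mp ht))
    rw [Finset.sum_const, Finset.card_range, nsmul_eq_mul] at h0
    exact h0
  have hA : ‖θhat 0 - θstar‖^2 ≤ 2 * M^2 := by
    have h0 : θhat 0 = θ 0 := by simp only [hθhat, if_pos (by omega : 0 < T)]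
    have hb := hbdd 0 (by omega)
    calc ‖θhat 0 - θstar‖^2 ≤ (Real.sqrt 2 * M)^2 := by
          rw [h0]; exact pow_le_pow_left₀ (norm_nonneg _) hb 2
      _ = 2 * M^2 := by
          rw [mul_pow, Real.sq_sqrt (by norm_num : (2:ℝ) ≥ 0)]
  have hB : (0:ℝ) ≤ ‖θhat T - θstar‖^2 := sq_nonneg _
  have hfrac : (‖θhat 0 - θstar‖^2 - ‖θhat T - θstar‖^2)/(2*η) ≤ M * s * L := by
    have hnum : ‖θhat 0 - θstar‖^2 - ‖θhat T - θstar‖^2 ≤ 2*M^2 := by linarith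
    have h2η : (0:ℝ) < 2*η := by linarith
    calc (‖θhat 0 - θstar‖^2 - ‖θhat T - θstar‖^2)/(2*η)
        ≤ 2*M^2/(2*η) := (div_le_div_iff_of_pos_right h2η).mpr hnum
      _ = M * s * L := by
          rw [hη]; field_simp
  have hTE : (T:ℝ) * (η * L^2 / 2) = M * L * s / 2 := by
    rw [hη, ← hss]; field_simp
  have hTC : (T:ℝ) * (3 * M * L / (2 * s)) = 3 * M * L * s / 2 := by
    rw [← hss]; field_simp
  have hexp : (T:ℝ) * (Real.sqrt 2 * M * Δ + 3 * M * L / (2 * s))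
      = (T:ℝ) * (Real.sqrt 2 * M * Δ) + 3 * M * L * s / 2 := by
    rw [mul_add, hTC]
  rw [hexp] at hlow
  rw [hTE] at hsum
  linarith
end
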